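/- Let F be a linearly ordered field with integer part I and let σ, ρ ∈ F with 1 ≤ σ < ρ be such that N_σ = N_ρ. Then ρ − σ is infinitesimal. -/

import Mathlib

/-- `N_α`: the set `{⌊n·α⌋ : n ∈ I, n ≥ 0}`, where `fl` is the floor function
associated to the integer part `I` of `F`. -/
def Nset {F : Type*} [Field F] [LinearOrder F] [IsStrictOrderedRing F] (I : Subring F) (fl : F → F) (α : F) : Set F :=
  {y | ∃ n, n ∈ I ∧ 0 ≤ n ∧ y = fl (n * α)}

theorem stmt_14 {F : Type*} [Field F] [LinearOrder F] [IsStrictOrderedRing F] (I : Subring F) (fl : F → F)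
    (hdisc : ∀ x ∈ I, ¬(0 < x ∧ x < 1))
    (hfl : ∀ x : F, fl x ∈ I ∧ fl x ≤ x ∧ x < fl x + 1)
    (σ ρ : F) (hσ1 : 1 ≤ σ) (hσρ : σ < ρ)
    (heq : Nset I fl σ = Nset I fl ρ) :
    ∀ n : ℕ, (n : F) * |ρ - σ| < 1 := by
  have hρ1 : (1:F) ≤ ρ := le_of_lt (lt_of_le_of_lt hσ1 hσρ)
  have hge1 : ∀ x ∈ I, 0 < x → (1:F) ≤ x := by
    intro x hx hpos
    by_contra h
    exact hdisc x hx ⟨hpos, lt_of_not_ge h⟩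
  have hmono : ∀ x y : F, x ≤ y → fl x ≤ fl y := by
    intro x y hxy
    obtain ⟨hx1, hx2, hx3⟩ := hfl x
    obtain ⟨hy1, hy2, hy3⟩ := hfl y
    by_contra h
    have h1 : (1:F) ≤ fl x - fl y := hge1 _ (I.sub_mem hx1 hy1) (by linarith [lt_of_not_ge h])
    linarith
  have hnat : ∀ n : ℕ, ((n:F)) ∈ I := fun n => natCast_mem I n
  have hex : ∀ n : ℕ, ∃ m : F, m ∈ I ∧ 0 ≤ m ∧ fl ((n:F) * σ) = fl (m * ρ) := by
    intro n
    have hmem : fl ((n:F) * σ) ∈ Nset I fl σ := ⟨n, hnat n, Nat.cast_nonneg n, rfl⟩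
    rw [heq] at hmem
    exact hmem
  choose m hmI hm0 hmeq using hex
  -- upper bound: m n ≤ n
  have hub : ∀ n : ℕ, m n ≤ (n:F) := by
    intro n
    by_contra h
    push_neg at h
    have h1 : (1:F) ≤ m n - n := hge1 _ (I.sub_mem (hmI n) (hnat n)) (by linarith)
    obtain ⟨_, hfm1, hfm2⟩ := hfl (m n * ρ)
    obtain ⟨_, hfn1, hfn2⟩ := hfl ((n:F) * σ)
    have key : (n:F) * σ + 1 ≤ m n * ρ := by
      have hc : ((n:F) + 1) ≤ m n := by linarith
      nlinarith [Nat.cast_nonneg (α := F) n, mul_le_mul_of_nonneg_right hc (le_trans zero_le_one hσ1),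
        mul_le_mul_of_nonneg_left (le_of_lt hσρ) (le_trans (by positivity) hc)]
    rw [hmeq n] at hfn1
    linarith
  -- lower bound: n ≤ m n, by induction
  have hlb : ∀ n : ℕ, (n:F) ≤ m n := by
    intro n
    induction n with
    | zero => simpa using hm0 0
    | succ k ih =>
      have hcast : (((k+1:ℕ)):F) = (k:F) + 1 := by push_cast; ring
      have hstep : fl ((k:F) * σ) < fl (((k:F)+1) * σ) := by
        obtain ⟨_, h1, h2⟩ := hfl ((k:F) * σ)
        obtain ⟨_, h3, h4⟩ := hfl (((k:F)+1) * σ)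
        nlinarith [Nat.cast_nonneg (α := F) k]
      rw [hmeq k, show ((k:F)+1) * σ = ((k+1:ℕ):F) * σ by rw [hcast], hmeq (k+1)] at hstep
      have hmlt : m k < m (k+1) := by
        by_contra h
        push_neg at h
        exact absurd (hmono _ _ (mul_le_mul_of_nonneg_right h (by linarith))) (not_le.mpr hstep)
      have h1 : (1:F) ≤ m (k+1) - m k := hge1 _ (I.sub_mem (hmI _) (hmI _)) (by linarith)
      push_cast
      linarith
  intro n
  have hmn : m n = (n:F) := le_antisymm (hub n) (hlb n)
  have heqn : fl ((n:F) * σ) = fl ((n:F) * ρ) := by rw [hmeq n, hmn]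
  obtain ⟨_, h1, h2⟩ := hfl ((n:F) * σ)
  obtain ⟨_, h3, h4⟩ := hfl ((n:F) * ρ)
  rw [heqn] at h1 h2
  rw [abs_of_pos (by linarith : (0:F) < ρ - σ)]
  nlinarith
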